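/- Let q = 2^e with e ≥ 2 and let a be an integer with 1 ≤ a < e and gcd(a,e) = 1. Let A ∈ M_2(F_q) be the matrix with (1,1)-entry 1 and all other entries 0. Then the only g ∈ SL_2(F_q) satisfying g^{-1} · A · g^{(2^a)} = A is the identity matrix, where g^{(2^a)} is obtained from g by applying x ↦ x^{2^a} to each entry. (Hence A is a representative of a regular orbit of SL_2(q) on M_2(F_q) under the twisted conjugation action.) -/

import Mathlib

lemma char2' {F : Type*} [Field F] [Fintype F] (e : ℕ)
    (hcard : Fintype.card F = 2 ^ e) : CharP F 2 := by
  obtain ⟨n, hp, hn⟩ := FiniteField.card F (ringChar F)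
  have hd : ringChar F ∣ 2 := hp.dvd_of_dvd_pow (n := e) (by
    rw [← hcard, hn]; exact dvd_pow_self _ n.ne_zero)
  have : ringChar F = 2 := (Nat.prime_dvd_prime_iff_eq hp Nat.prime_two).mp hd
  rw [← this]; exact ringChar.charP F

lemma pow_two_inj {F : Type*} [Field F] (hF : CharP F 2) (t : ℕ) :
    Function.Injective (fun x : F => x ^ 2 ^ t) := by
  intro x y hxy
  apply Function.Injective.iterate (frobenius_inj F 2) t
  simpa [iterate_frobenius] using hxy

lemma fix_gcd {F : Type*} [Field F] (hF : CharP F 2) (α : F) :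
    ∀ m n : ℕ, α ^ 2 ^ m = α → α ^ 2 ^ n = α → α ^ 2 ^ Nat.gcd m n = α := by
  intro m n
  induction m, n using Nat.gcd.induction with
  | H0 n => intro _ h; simpa using h
  | H1 m n hm ih =>
    intro h1 h2
    rw [Nat.gcd_rec]
    refine ih ?_ h1
    have key : ∀ k, α ^ 2 ^ (m * k) = α := by
      intro k
      induction k with
      | zero => simp
      | succ k ihk => rw [Nat.mul_succ, pow_add, pow_mul, ihk, h1]
    apply pow_two_inj hF (m * (n / m))
    simp only
    rw [← pow_mul, ← pow_add, Nat.add_comm, Nat.div_add_mod, h2, key]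


/-- Let `F` be the field with `q = 2^e` elements (`e ≥ 2`), and `1 ≤ a < e` with
`gcd(a,e) = 1`. Let `A` be the `2×2` matrix with `(1,1)`-entry `1` and all other entries `0`.
Then the only `g ∈ SL_2(F)` with `g⁻¹ · A · g^{(2^a)} = A` is the identity, so `A`
represents a regular orbit of `SL_2(q)` on `M_2(F)` under the twisted conjugation action. -/
theorem stmt12 {F : Type*} [Field F] [Fintype F] (e a : ℕ) (he : 2 ≤ e)
    (hcard : Fintype.card F = 2 ^ e) (ha1 : 1 ≤ a) (hae : a < e) (hgcd : Nat.gcd a e = 1)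
    (g : Matrix.SpecialLinearGroup (Fin 2) F)
    (hg : ((g⁻¹ : Matrix.SpecialLinearGroup (Fin 2) F) : Matrix (Fin 2) (Fin 2) F) *
        Matrix.single 0 0 (1 : F) *
        ((g : Matrix (Fin 2) (Fin 2) F).map (fun x => x ^ 2 ^ a)) =
        Matrix.single 0 0 (1 : F)) :
    g = 1 := by
  have hchar : CharP F 2 := char2' e hcard
  have h00 := congrFun (congrFun hg 0) 0
  have h01 := congrFun (congrFun hg 0) 1
  have h10 := congrFun (congrFun hg 1) 0
  have h11 := congrFun (congrFun hg 1) 1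
  simp [Matrix.SpecialLinearGroup.coe_inv, Matrix.adjugate_fin_two, Matrix.mul_apply, Fin.sum_univ_two,
    Matrix.single_apply, Matrix.vecMul, dotProduct] at h00 h01 h10 h11
  have hg11 : (g : Matrix (Fin 2) (Fin 2) F) 1 1 ≠ 0 := by
    intro h; rw [h, zero_mul] at h00; exact zero_ne_one h00
  have hg00 : (g : Matrix (Fin 2) (Fin 2) F) 0 0 ≠ 0 := by
    intro h; rw [h] at h00; simp [zero_pow (Nat.two_pow_pos a).ne'] at h00
  have hb : (g : Matrix (Fin 2) (Fin 2) F) 0 1 = 0 := h01.resolve_left hg11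
  have hc : (g : Matrix (Fin 2) (Fin 2) F) 1 0 = 0 := h10.resolve_right hg00
  have hdet : (g : Matrix (Fin 2) (Fin 2) F).det = 1 := g.2
  rw [Matrix.det_fin_two, hb, hc, mul_zero, sub_zero] at hdet
  set α := (g : Matrix (Fin 2) (Fin 2) F) 0 0 with hα
  -- g 1 1 = α⁻¹
  have h11v : (g : Matrix (Fin 2) (Fin 2) F) 1 1 = α⁻¹ := by
    field_simp
    linear_combination hdet
  rw [h11v] at h00
  have hfix : α ^ 2 ^ a = α := by
    field_simp at h00
    linear_combination h00
  have hfixe : α ^ 2 ^ e = α := by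
    rw [← hcard]; exact FiniteField.pow_card α
  have := fix_gcd hchar α a e hfix hfixe
  rw [hgcd, pow_one] at this
  have hα1 : α = 1 := by
    have h2 : α * α = α := by rw [← sq]; exact this
    have := mul_right_cancel₀ hg00 (h2.trans (one_mul α).symm)
    exact this
  ext i j
  fin_cases i <;> fin_cases j <;>
    simp [hb, hc, h11v, hα1, ← hα]
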